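/- The generating function S(x,y) for stack polygons counted by width (exponent of x) and height (exponent of y) satisfies S(x,y) = xy(1-x)/((1-x)^2 - y); equivalently, S = xy + xS + S_+ and S_+ = yS + xS_+ for the auxiliary series S_+ of stacks with no column of minimal height on the right. -/

import Mathlib

/-- A stack polygon: a nonempty unimodal sequence of positive column heights
(weakly increasing, then weakly decreasing). -/
def IsStack (l : List ℕ) : Prop :=
  l ≠ [] ∧ (∀ x ∈ l, 0 < x) ∧
    ∃ l₁ l₂ : List ℕ, l = l₁ ++ l₂ ∧ l₁.Pairwise (· ≤ ·) ∧ l₂.Pairwise (· ≥ ·)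

/-- The generating function `S(x,y) = Σ x^width y^height` over all stack polygons,
as a formal power series in two variables (`X 0 = x`, `X 1 = y`). -/
noncomputable def stackGF : MvPowerSeries (Fin 2) ℚ :=
  fun d => (Set.ncard {l : List ℕ | IsStack l ∧ l.length = d 0 ∧ l.foldr max 0 = d 1} : ℚ)


section AuxStack


/-! helper lemmas about foldr max -/

lemma le_foldr_max {l : List ℕ} {a : ℕ} (h : a ∈ l) : a ≤ l.foldr max 0 := by
  induction l with
  | nil => simp at h
  | cons b t ih =>
    rcases List.mem_cons.1 h with rfl | h
    · exact le_max_left _ _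
    · exact le_trans (ih h) (le_max_right _ _)

lemma foldr_max_le {l : List ℕ} {n : ℕ} (h : ∀ x ∈ l, x ≤ n) : l.foldr max 0 ≤ n := by
  induction l with
  | nil => simp
  | cons b t ih =>
    simp only [List.foldr_cons, max_le_iff]
    exact ⟨h b (by simp), ih fun x hx => h x (by simp [hx])⟩

lemma foldr_max_mem {l : List ℕ} {n : ℕ} (h : l.foldr max 0 = n) (hn : n ≠ 0) : n ∈ l := by
  induction l with
  | nil => simp at h; omega
  | cons b t ih =>
    simp only [List.foldr_cons] at h
    rcases max_choice b (t.foldr max 0) with h' | h' <;> rw [h'] at h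
    · simp [h]
    · simp [ih h]

lemma foldr_max_eq {l : List ℕ} {n : ℕ} (h1 : ∀ x ∈ l, x ≤ n) (h2 : n ∈ l) :
    l.foldr max 0 = n :=
  le_antisymm (foldr_max_le h1) (le_foldr_max h2)

/-! takeWhile / dropWhile helpers -/

lemma takeWhile_append_all {p : ℕ → Bool} {u : List ℕ} (v : List ℕ) (hu : ∀ x ∈ u, p x) :
    (u ++ v).takeWhile p = u ++ v.takeWhile p := by
  induction u with
  | nil => simp
  | cons a t ih =>
    simp only [List.cons_append, List.takeWhile_cons, hu a (by simp), cond_true]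
    rw [ih fun x hx => hu x (by simp [hx])]
    simp

lemma dropWhile_append_all {p : ℕ → Bool} {u : List ℕ} (v : List ℕ) (hu : ∀ x ∈ u, p x) :
    (u ++ v).dropWhile p = v.dropWhile p := by
  induction u with
  | nil => simp
  | cons a t ih =>
    simp only [List.cons_append, List.dropWhile_cons, hu a (by simp), cond_true]
    exact ih fun x hx => hu x (by simp [hx])

lemma mem_dropWhile_sorted {l : List ℕ} {n : ℕ} (hs : l.Pairwise (· ≤ ·)) :
    ∀ x ∈ l.dropWhile (fun y => decide (y ≤ n)), n < x := by
  induction l with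
  | nil => simp
  | cons a t ih =>
    rw [List.dropWhile_cons]
    by_cases ha : a ≤ n
    · simp only [ha, decide_eq_true, cond_true]
      exact ih hs.of_cons
    · simp only [ha, decide_eq_false, cond_false]
      intro x hx
      rcases List.mem_cons.1 hx with rfl | hx
      · omega
      · exact lt_of_lt_of_le (by omega) (List.rel_of_pairwise_cons hs hx)


/-- counting sorted lists over Fin k -/
lemma card_sorted_fin (k d : ℕ) :
    Set.ncard {l : List (Fin k) | l.Pairwise (· ≤ ·) ∧ l.length = d} = (k + d - 1).choose d := by
  rw [← Nat.card_coe_set_eq]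
  have e : Sym (Fin k) d ≃ {l : List (Fin k) | l.Pairwise (· ≤ ·) ∧ l.length = d} :=
    { toFun := fun m => ⟨Multiset.sort m.1 (· ≤ ·), Multiset.pairwise_sort _ _, by
        simp [m.2]⟩
      invFun := fun l => ⟨(l.1 : Multiset (Fin k)), by simp [l.2.2]⟩
      left_inv := fun m => Subtype.ext (by simp)
      right_inv := fun l => Subtype.ext (by
        show Multiset.sort (l.1 : Multiset (Fin k)) (· ≤ ·) = l.1
        apply List.Perm.eq_of_pairwise' (r := (· ≤ ·)) (Multiset.pairwise_sort _ _) l.2.1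
        rw [← Multiset.coe_eq_coe, Multiset.sort_eq]) }
  rw [← Nat.card_congr e, Nat.card_eq_fintype_card, Sym.card_sym_eq_choose]
  simp


lemma card_sorted_nat (k d : ℕ) :
    Set.ncard {l : List ℕ | l.Pairwise (· ≤ ·) ∧ l.length = d ∧ ∀ x ∈ l, 1 ≤ x ∧ x ≤ k}
      = (k + d - 1).choose d := by
  rw [← card_sorted_fin k d]
  have himg : (fun l : List (Fin k) => l.map (fun i => i.val + 1)) ''
      {l : List (Fin k) | l.Pairwise (· ≤ ·) ∧ l.length = d}
      = {l : List ℕ | l.Pairwise (· ≤ ·) ∧ l.length = d ∧ ∀ x ∈ l, 1 ≤ x ∧ x ≤ k} := by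
    ext l
    constructor
    · rintro ⟨f, ⟨hs, hlen⟩, rfl⟩
      refine ⟨?_, by simp [hlen], ?_⟩
      · rw [List.pairwise_map]
        exact hs.imp (by intro a b h; simpa using h)
      · intro x hx
        simp only [List.mem_map] at hx
        obtain ⟨i, _, rfl⟩ := hx
        have := i.isLt
        exact ⟨by omega, by omega⟩
    · rintro ⟨hs, hlen, hbd⟩
      refine ⟨l.pmap (fun x h => (⟨x - 1, by omega⟩ : Fin k)) hbd, ⟨?_, by simp [hlen]⟩, ?_⟩
      · rw [List.pairwise_pmap]
        exact hs.imp (by intro a b h h1 h2; simp [Fin.le_def]; omega)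
      · show (List.pmap (fun x h => (⟨x - 1, by omega⟩ : Fin k)) l hbd).map (fun i => i.val + 1) = l
        rw [List.map_pmap]
        calc l.pmap (fun x h => x - 1 + 1) hbd = l.pmap (fun x _ => x) hbd := by
              apply List.pmap_congr_left; intro x hx h1 _; omega
          _ = l := by simp
  rw [← himg]
  apply Set.ncard_image_of_injOn
  intro a _ b _ h
  exact List.map_injective_iff.2 (fun i j => by simp; omega) h


lemma mem_dropWhile_sorted_lt {l : List ℕ} {n : ℕ} (hs : l.Pairwise (· ≤ ·)) :
    ∀ x ∈ l.dropWhile (fun y => decide (y < n)), n ≤ x := by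
  induction l with
  | nil => simp
  | cons a t ih =>
    rw [List.dropWhile_cons]
    by_cases ha : a < n
    · simp only [ha, decide_eq_true, cond_true]
      exact ih hs.of_cons
    · simp only [ha, decide_eq_false, cond_false]
      intro x hx
      rcases List.mem_cons.1 hx with rfl | hx
      · omega
      · exact le_trans (by omega) (List.rel_of_pairwise_cons hs hx)

lemma mem_dropWhile_sorted_ge {l : List ℕ} {n : ℕ} (hs : l.Pairwise (· ≥ ·)) :
    ∀ x ∈ l.dropWhile (fun y => decide (n ≤ y)), x < n := by
  induction l with
  | nil => simp
  | cons a t ih =>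
    rw [List.dropWhile_cons]
    by_cases ha : n ≤ a
    · simp only [ha, decide_eq_true, cond_true]
      exact ih hs.of_cons
    · simp only [ha, decide_eq_false, cond_false]
      intro x hx
      rcases List.mem_cons.1 hx with rfl | hx
      · omega
      · exact lt_of_le_of_lt (List.rel_of_pairwise_cons hs hx) (by omega)

lemma sorted_append_const {U : List ℕ} {n k : ℕ} (hU : U.Pairwise (· ≤ ·))
    (hub : ∀ x ∈ U, x ≤ n) : (U ++ List.replicate k n).Pairwise (· ≤ ·) := by
  rw [List.pairwise_append]
  exact ⟨hU, List.pairwise_replicate.2 (by simp), fun a ha b hb => by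
    rw [List.eq_of_mem_replicate hb]; exact hub a ha⟩

lemma stack_decomp {l l₁ l₂ : List ℕ} {n : ℕ} (hl : l = l₁ ++ l₂)
    (h1 : l₁.Pairwise (· ≤ ·)) (h2 : l₂.Pairwise (· ≥ ·))
    (hub : ∀ x ∈ l, x ≤ n) (hmem : n ∈ l) :
    ∃ U V : List ℕ, l = U ++ n :: V ∧ U.Pairwise (· ≤ ·) ∧ V.Pairwise (· ≥ ·) ∧
      ∀ x ∈ V, x < n := by
  by_cases hn2 : n ∈ l₂
  · -- n in the decreasing part
    set P := l₂.takeWhile (fun y => decide (n ≤ y)) with hP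
    set Q := l₂.dropWhile (fun y => decide (n ≤ y)) with hQ
    have hPQ : l₂ = P ++ Q := (List.takeWhile_append_dropWhile).symm
    have hQlt : ∀ x ∈ Q, x < n := mem_dropWhile_sorted_ge h2
    have hPrep : P = List.replicate P.length n := by
      apply List.eq_replicate_of_mem
      intro x hx
      have h1x : n ≤ x := by simpa using List.mem_takeWhile_imp hx
      have h2x : x ≤ n := hub x (by
        rw [hl]
        exact List.mem_append_right _ ((List.takeWhile_sublist _).subset hx))
      omega
    have hPne : P ≠ [] := by
      intro h
      rw [hPQ, h, List.nil_append] at hn2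
      exact absurd (hQlt n hn2) (by omega)
    have hk : P.length = (P.length - 1) + 1 :=
      (Nat.succ_pred_eq_of_pos (List.length_pos_iff.2 hPne)).symm
    refine ⟨l₁ ++ List.replicate (P.length - 1) n, Q, ?_, ?_, ?_, hQlt⟩
    · rw [hl, hPQ, hPrep, hk, List.replicate_succ']
      simp [List.append_assoc]
    · exact sorted_append_const h1 (fun x hx => hub x (by rw [hl]; simp [hx]))
    · exact h2.sublist (List.dropWhile_sublist _)
  · -- n in the increasing part
    have hn1 : n ∈ l₁ := by
      rw [hl, List.mem_append] at hmem
      tauto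
    set P := l₁.takeWhile (fun y => decide (y < n)) with hP
    set R := l₁.dropWhile (fun y => decide (y < n)) with hR
    have hPR : l₁ = P ++ R := (List.takeWhile_append_dropWhile).symm
    have hRrep : R = List.replicate R.length n := by
      apply List.eq_replicate_of_mem
      intro x hx
      have h1x : n ≤ x := mem_dropWhile_sorted_lt h1 x hx
      have h2x : x ≤ n := hub x (by
        rw [hl]
        exact List.mem_append_left _ ((List.dropWhile_sublist _).subset hx))
      omega
    have hRne : R ≠ [] := by
      intro h
      rw [hPR, h, List.append_nil] at hn1
      have := List.mem_takeWhile_imp hn1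
      simp at this
    have hk : R.length = (R.length - 1) + 1 :=
      (Nat.succ_pred_eq_of_pos (List.length_pos_iff.2 hRne)).symm
    refine ⟨P ++ List.replicate (R.length - 1) n, l₂, ?_, ?_, h2, ?_⟩
    · rw [hl, hPR, hRrep, hk, List.replicate_succ']
      simp [List.append_assoc]
    · refine sorted_append_const (h1.sublist (List.takeWhile_sublist _)) ?_
      intro x hx
      have := List.mem_takeWhile_imp hx
      simp at this; omega
    · intro x hx
      have h2x : x ≤ n := hub x (by rw [hl]; simp [hx])
      have : x ≠ n := fun h => hn2 (h ▸ hx)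
      omega


/-- the insertion map -/
def stackPhi (n : ℕ) (f : List ℕ) : List ℕ :=
  f.takeWhile (fun y => decide (y ≤ n)) ++
    n :: (f.dropWhile (fun y => decide (y ≤ n))).map (fun v => 2 * n - v)

lemma takeWhile_eq_nil_of {p : ℕ → Bool} {u : List ℕ} (h : ∀ x ∈ u, ¬ p x = true) :
    u.takeWhile p = [] := by
  cases u with
  | nil => rfl
  | cons a t => simp [List.takeWhile_cons, h a (by simp)]

lemma dropWhile_eq_self_of {p : ℕ → Bool} {u : List ℕ} (h : ∀ x ∈ u, ¬ p x = true) :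
    u.dropWhile p = u := by
  cases u with
  | nil => rfl
  | cons a t => simp [List.dropWhile_cons, h a (by simp)]

section
variable {m n : ℕ}

def SortedSet (m n : ℕ) : Set (List ℕ) :=
  {f | f.Pairwise (· ≤ ·) ∧ f.length = m - 1 ∧ ∀ x ∈ f, 1 ≤ x ∧ x ≤ 2 * n - 1}

def StackSet (m n : ℕ) : Set (List ℕ) :=
  {l | IsStack l ∧ l.length = m ∧ l.foldr max 0 = n}

lemma phi_mapsTo (hm : 1 ≤ m) (hn : 1 ≤ n) :
    Set.MapsTo (stackPhi n) (SortedSet m n) (StackSet m n) := by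
  rintro f ⟨hs, hlen, hbd⟩
  set A := f.takeWhile (fun y => decide (y ≤ n)) with hA
  set B := f.dropWhile (fun y => decide (y ≤ n)) with hB
  have hAB : A ++ B = f := List.takeWhile_append_dropWhile
  have hAle : ∀ x ∈ A, x ≤ n := fun x hx => by simpa using List.mem_takeWhile_imp hx
  have hBgt : ∀ x ∈ B, n < x := mem_dropWhile_sorted hs
  have hAmem : ∀ x ∈ A, x ∈ f := fun x hx => (List.takeWhile_sublist _).subset hx
  have hBmem : ∀ x ∈ B, x ∈ f := fun x hx => (List.dropWhile_sublist _).subset hx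
  refine ⟨⟨?_, ?_, A ++ [n], B.map (fun v => 2 * n - v), ?_, ?_, ?_⟩, ?_, ?_⟩
  · simp [stackPhi, ← hA, ← hB]
  · intro x hx
    rw [stackPhi, ← hA, ← hB] at hx
    rcases List.mem_append.1 hx with hx | hx
    · exact (hbd x (hAmem x hx)).1
    · rcases List.mem_cons.1 hx with rfl | hx
      · omega
      · obtain ⟨v, hv, rfl⟩ := List.mem_map.1 hx
        have := (hbd v (hBmem v hv)).2
        omega
  · simp [stackPhi, ← hA, ← hB]
  · rw [List.pairwise_append]
    refine ⟨(hs.sublist (List.takeWhile_sublist _) : _), by simp, ?_⟩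
    intro a ha b hb
    rw [List.mem_singleton] at hb
    subst hb
    exact hAle a ha
  · rw [List.pairwise_map]
    refine (hs.sublist (List.dropWhile_sublist _)).imp ?_
    intro a b hab
    simp only [ge_iff_le]
    omega
  · have := congrArg List.length hAB
    simp only [List.length_append] at this
    simp only [stackPhi, ← hA, ← hB, List.length_append, List.length_cons, List.length_map]
    omega
  · apply foldr_max_eq
    · intro x hx
      rw [stackPhi, ← hA, ← hB] at hx
      rcases List.mem_append.1 hx with hx | hx
      · exact hAle x hx
      · rcases List.mem_cons.1 hx with rfl | hx
        · exact le_refl _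
        · obtain ⟨v, hv, rfl⟩ := List.mem_map.1 hx
          have := hBgt v hv
          omega
    · rw [stackPhi, ← hA, ← hB]
      exact List.mem_append_right _ (List.mem_cons_self)

lemma phi_injOn (hn : 1 ≤ n) : Set.InjOn (stackPhi n) (SortedSet m n) := by
  have key : ∀ f ∈ SortedSet m n,
      ((stackPhi n f).reverse.takeWhile (fun y => decide (y < n)),
       (stackPhi n f).reverse.dropWhile (fun y => decide (y < n)))
      = (((f.dropWhile (fun y => decide (y ≤ n))).map (fun v => 2 * n - v)).reverse,
         n :: (f.takeWhile (fun y => decide (y ≤ n))).reverse) := by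
    rintro f ⟨hs, hlen, hbd⟩
    set A := f.takeWhile (fun y => decide (y ≤ n)) with hA
    set B := f.dropWhile (fun y => decide (y ≤ n)) with hB
    have hBgt : ∀ x ∈ B, n < x := mem_dropWhile_sorted hs
    have hrev : (stackPhi n f).reverse
        = (B.map (fun v => 2 * n - v)).reverse ++ n :: A.reverse := by
      simp [stackPhi, ← hA, ← hB]
    have hsm : ∀ x ∈ (B.map (fun v => 2 * n - v)).reverse, (decide (x < n)) = true := by
      intro x hx
      rw [List.mem_reverse] at hx
      obtain ⟨v, hv, rfl⟩ := List.mem_map.1 hx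
      have := hBgt v hv
      simp; omega
    rw [hrev, takeWhile_append_all _ hsm, dropWhile_append_all _ hsm]
    simp [List.takeWhile_cons, List.dropWhile_cons]
  intro f hf f' hf' heq
  have h1 := key f hf
  have h2 := key f' hf'
  rw [heq, h2] at h1
  have e1 := congrArg Prod.fst h1
  have e2 := congrArg Prod.snd h1
  simp only at e1 e2
  have eA : f'.takeWhile (fun y => decide (y ≤ n)) = f.takeWhile (fun y => decide (y ≤ n)) :=
    List.reverse_injective (by injection e2)
  have eB : (f'.dropWhile (fun y => decide (y ≤ n))).map (fun v => 2 * n - v)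
      = (f.dropWhile (fun y => decide (y ≤ n))).map (fun v => 2 * n - v) :=
    List.reverse_injective e1
  have gg : ∀ (g : List ℕ) (hg : g ∈ SortedSet m n),
      ((g.dropWhile (fun y => decide (y ≤ n))).map (fun v => 2 * n - v)).map
        (fun v => 2 * n - v) = g.dropWhile (fun y => decide (y ≤ n)) := by
    rintro g ⟨hs, hlen, hbd⟩
    rw [List.map_map]
    apply List.map_congr_left ?_ |>.trans (List.map_id _)
    intro v hv
    have := (hbd v ((List.dropWhile_sublist _).subset hv)).2
    simp; omega
  have eB' : f'.dropWhile (fun y => decide (y ≤ n)) = f.dropWhile (fun y => decide (y ≤ n)) := by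
    rw [← gg f' hf', ← gg f hf, eB]
  calc f = f.takeWhile (fun y => decide (y ≤ n)) ++ f.dropWhile (fun y => decide (y ≤ n)) :=
        (List.takeWhile_append_dropWhile).symm
    _ = f'.takeWhile (fun y => decide (y ≤ n)) ++ f'.dropWhile (fun y => decide (y ≤ n)) := by
        rw [eA, eB']
    _ = f' := List.takeWhile_append_dropWhile

end

lemma phi_surjOn (hm : 1 ≤ m) (hn : 1 ≤ n) :
    Set.SurjOn (stackPhi n) (SortedSet m n) (StackSet m n) := by
  rintro l ⟨⟨hne, hpos, l₁, l₂, hl, h1, h2⟩, hlen, hmax⟩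
  have hub : ∀ x ∈ l, x ≤ n := fun x hx => hmax ▸ le_foldr_max hx
  have hmem : n ∈ l := foldr_max_mem hmax (by omega)
  obtain ⟨U, V, hUV, hU, hV, hVlt⟩ := stack_decomp hl h1 h2 hub hmem
  have hUmem : ∀ x ∈ U, x ∈ l := fun x hx => hUV ▸ List.mem_append_left _ hx
  have hVmem : ∀ x ∈ V, x ∈ l := fun x hx =>
    hUV ▸ List.mem_append_right _ (List.mem_cons_of_mem _ hx)
  have hUle : ∀ x ∈ U, x ≤ n := fun x hx => hub x (hUmem x hx)
  have hVbd : ∀ x ∈ V, 1 ≤ x ∧ x < n := fun x hx => ⟨hpos x (hVmem x hx), hVlt x hx⟩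
  refine ⟨U ++ V.map (fun v => 2 * n - v), ⟨?_, ?_, ?_⟩, ?_⟩
  · rw [List.pairwise_append]
    refine ⟨hU, ?_, ?_⟩
    · rw [List.pairwise_map]
      exact hV.imp fun {a b} hab => by omega
    · intro a ha b hb
      obtain ⟨v, hv, rfl⟩ := List.mem_map.1 hb
      have := hVbd v hv
      have := hUle a ha
      omega
  · have := congrArg List.length hUV
    simp only [List.length_append, List.length_cons, hlen] at this
    simp only [List.length_append, List.length_map]
    omega
  · intro x hx
    rcases List.mem_append.1 hx with hx | hx
    · exact ⟨hpos x (hUmem x hx), by have := hUle x hx; omega⟩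
    · obtain ⟨v, hv, rfl⟩ := List.mem_map.1 hx
      have := hVbd v hv
      omega
  · have hVgt : ∀ x ∈ V.map (fun v => 2 * n - v), ¬ (decide (x ≤ n)) = true := by
      intro x hx
      obtain ⟨v, hv, rfl⟩ := List.mem_map.1 hx
      have := hVbd v hv
      simp; omega
    have hUp : ∀ x ∈ U, (decide (x ≤ n)) = true := fun x hx => by
      simpa using hUle x hx
    rw [stackPhi, takeWhile_append_all _ hUp, dropWhile_append_all _ hUp,
      takeWhile_eq_nil_of hVgt, dropWhile_eq_self_of hVgt, List.append_nil, List.map_map]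
    rw [hUV]
    congr 1
    congr 1
    apply List.map_congr_left ?_ |>.trans (List.map_id _)
    intro v hv
    have := hVbd v hv
    simp; omega

lemma card_stacks (hm : 1 ≤ m) (hn : 1 ≤ n) :
    Set.ncard (StackSet m n) = (m + 2 * n - 3).choose (m - 1) := by
  have himg : stackPhi n '' SortedSet m n = StackSet m n :=
    Set.Subset.antisymm ((phi_mapsTo hm hn).image_subset) (phi_surjOn hm hn)
  rw [← himg, Set.ncard_image_of_injOn (phi_injOn hn)]
  have := card_sorted_nat (2 * n - 1) (m - 1)
  rw [SortedSet]
  rw [this]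
  congr 1
  omega


noncomputable def Acoef (m n : ℕ) : ℚ :=
  if 1 ≤ m ∧ 1 ≤ n then ((m + 2 * n - 3).choose (m - 1) : ℚ) else 0

lemma stackSet_empty_w {n : ℕ} : StackSet 0 n = ∅ := by
  ext l
  simp only [StackSet, Set.mem_setOf_eq, Set.mem_empty_iff_false, iff_false]
  rintro ⟨⟨hne, -, -⟩, hlen, -⟩
  exact hne (List.length_eq_zero_iff.1 hlen)

lemma stackSet_empty_h {m : ℕ} : StackSet m 0 = ∅ := by
  ext l
  simp only [StackSet, Set.mem_setOf_eq, Set.mem_empty_iff_false, iff_false]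
  rintro ⟨⟨hne, hpos, -⟩, -, hmax⟩
  obtain ⟨a, ha⟩ := List.exists_mem_of_ne_nil l hne
  have := le_foldr_max ha
  have := hpos a ha
  omega

lemma stackGF_coeff (d : Fin 2 →₀ ℕ) :
    MvPowerSeries.coeff d stackGF = Acoef (d 0) (d 1) := by
  rw [MvPowerSeries.coeff_apply]
  show (Set.ncard (StackSet (d 0) (d 1)) : ℚ) = _
  rw [Acoef]
  by_cases h : 1 ≤ d 0 ∧ 1 ≤ d 1
  · rw [if_pos h, card_stacks h.1 h.2]
  · rw [if_neg h]
    rcases Nat.lt_or_ge (d 0) 1 with h0 | h0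
    · rw [show d 0 = 0 by omega, stackSet_empty_w]; simp
    · rw [show d 1 = 0 by omega, stackSet_empty_h]; simp

lemma keyArith (m n : ℕ) :
    Acoef m n - ((if 1 ≤ m then Acoef (m - 1) n else 0)
        + (if 1 ≤ m then Acoef (m - 1) n else 0))
      + (if 2 ≤ m then Acoef (m - 2) n else 0)
      - (if 1 ≤ n then Acoef m (n - 1) else 0)
    = (if m = 1 ∧ n = 1 then 1 else 0) - (if m = 2 ∧ n = 1 then 1 else 0) := by
  rcases n with _ | _ | j
  · -- n = 0
    simp [Acoef]
  · -- n = 1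
    rcases m with _ | _ | _ | k
    · simp [Acoef]
    · simp [Acoef]
    · norm_num [Acoef]
    · have e1 : Acoef (k + 3) 1 = 1 := by
        rw [Acoef, if_pos (by omega)]
        rw [show k + 3 + 2 * 1 - 3 = k + 2 by omega, show k + 3 - 1 = k + 2 by omega]
        simp
      have e2 : Acoef (k + 2) 1 = 1 := by
        rw [Acoef, if_pos (by omega)]
        rw [show k + 2 + 2 * 1 - 3 = k + 1 by omega, show k + 2 - 1 = k + 1 by omega]
        simp
      have e3 : Acoef (k + 1) 1 = 1 := by
        rw [Acoef, if_pos (by omega)]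
        rw [show k + 1 + 2 * 1 - 3 = k by omega, show k + 1 - 1 = k by omega]
        simp
      rw [if_pos (by omega), if_pos (by omega), if_pos (by omega),
        show k + 3 - 1 = k + 2 by omega, show k + 3 - 2 = k + 1 by omega,
        show (1 : ℕ) - 1 = 0 by omega]
      rw [e1, e2, e3]
      have : Acoef (k + 3) 0 = 0 := by rw [Acoef, if_neg (by omega)]
      rw [this]
      norm_num
      omega
  · -- n = j + 2
    rcases m with _ | _ | _ | k
    · simp [Acoef]
    · -- m = 1
      have e1 : Acoef 1 (j + 2) = 1 := by
        rw [Acoef, if_pos (by omega), show 1 + 2 * (j + 2) - 3 = 2 * j + 2 by omega]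
        simp
      have e2 : Acoef 1 (j + 1) = 1 := by
        rw [Acoef, if_pos (by omega), show 1 + 2 * (j + 1) - 3 = 2 * j by omega]
        simp
      rw [if_pos (by omega), if_neg (by omega), if_pos (by omega),
        show (1 : ℕ) - 1 = 0 by omega, show j + 2 - 1 = j + 1 by omega]
      have e0 : Acoef 0 (j + 2) = 0 := by rw [Acoef, if_neg (by omega)]
      rw [e0, e1, e2]
      norm_num
    · -- m = 2
      have e1 : Acoef 2 (j + 2) = (2 * j + 3 : ℚ) := by
        rw [Acoef, if_pos (by omega), show 2 + 2 * (j + 2) - 3 = 2 * j + 3 by omega,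
          show (2 : ℕ) - 1 = 1 by omega, Nat.choose_one_right]
        push_cast; ring
      have e2 : Acoef 1 (j + 2) = 1 := by
        rw [Acoef, if_pos (by omega), show 1 + 2 * (j + 2) - 3 = 2 * j + 2 by omega]
        simp
      have e3 : Acoef 2 (j + 1) = (2 * j + 1 : ℚ) := by
        rw [Acoef, if_pos (by omega), show 2 + 2 * (j + 1) - 3 = 2 * j + 1 by omega,
          show (2 : ℕ) - 1 = 1 by omega, Nat.choose_one_right]
        push_cast; ring
      rw [if_pos (by omega), if_pos (by omega), if_pos (by omega),
        show (2 : ℕ) - 1 = 1 by omega, show (2 : ℕ) - 2 = 0 by omega,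
        show j + 2 - 1 = j + 1 by omega]
      have e0 : Acoef 0 (j + 2) = 0 := by rw [Acoef, if_neg (by omega)]
      rw [e0, e1, e2, e3]
      norm_num
      ring
    · -- m = k + 3, n = j + 2 : generic case, Pascal
      rw [if_pos (by omega), if_pos (by omega), if_pos (by omega),
        show k + 3 - 1 = k + 2 by omega, show k + 3 - 2 = k + 1 by omega,
        show j + 2 - 1 = j + 1 by omega]
      have e1 : Acoef (k + 3) (j + 2) = ((k + 2 * j + 3 + 1).choose (k + 1 + 1) : ℚ) := by
        rw [Acoef, if_pos (by omega),
          show k + 3 + 2 * (j + 2) - 3 = k + 2 * j + 3 + 1 by omega,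
          show k + 3 - 1 = k + 1 + 1 by omega]
      have e2 : Acoef (k + 2) (j + 2) = ((k + 2 * j + 2 + 1).choose (k + 1) : ℚ) := by
        rw [Acoef, if_pos (by omega),
          show k + 2 + 2 * (j + 2) - 3 = k + 2 * j + 2 + 1 by omega,
          show k + 2 - 1 = k + 1 by omega]
      have e3 : Acoef (k + 1) (j + 2) = ((k + 2 * j + 2).choose k : ℚ) := by
        rw [Acoef, if_pos (by omega),
          show k + 1 + 2 * (j + 2) - 3 = k + 2 * j + 2 by omega,
          show k + 1 - 1 = k by omega]
      have e4 : Acoef (k + 3) (j + 1) = ((k + 2 * j + 2).choose (k + 2) : ℚ) := by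
        rw [Acoef, if_pos (by omega),
          show k + 3 + 2 * (j + 1) - 3 = k + 2 * j + 2 by omega,
          show k + 3 - 1 = k + 2 by omega]
      rw [e1, e2, e3, e4, if_neg (by omega), if_neg (by omega)]
      rw [Nat.choose_succ_succ (k + 2 * j + 3) (k + 1),
        Nat.choose_succ_succ (k + 2 * j + 2) k,
        show (k + 2 * j + 3).choose (k + 1 + 1) = (k + 2 * j + 2).choose (k + 1)
          + (k + 2 * j + 2).choose (k + 2) from by
            rw [show k + 2 * j + 3 = k + 2 * j + 2 + 1 by omega]
            exact Nat.choose_succ_succ _ _]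
      push_cast
      ring

open MvPowerSeries Finsupp in
lemma finsupp_eq_pair (d : Fin 2 →₀ ℕ) (a b : ℕ) :
    d = single 0 a + single 1 b ↔ d 0 = a ∧ d 1 = b := by
  constructor
  · rintro rfl
    constructor <;> simp
  · rintro ⟨h0, h1⟩
    ext i
    match i with
    | 0 => simp [h0]
    | 1 => simp [h1]

open MvPowerSeries Finsupp in
lemma coeff_X_mul' (s : Fin 2) (d : Fin 2 →₀ ℕ) (φ : MvPowerSeries (Fin 2) ℚ) :
    coeff d (X s * φ) = if single s 1 ≤ d then coeff (d - single s 1) φ else 0 := by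
  rw [X_def, coeff_monomial_mul]
  simp

open MvPowerSeries Finsupp in
theorem part1 :
    ((1 - X 0) ^ 2 - X 1 : MvPowerSeries (Fin 2) ℚ) * stackGF = X 0 * X 1 * (1 - X 0) := by
  have expand : ((1 - X 0) ^ 2 - X 1 : MvPowerSeries (Fin 2) ℚ) * stackGF
      = stackGF - (X 0 * stackGF + X 0 * stackGF) + X 0 ^ 2 * stackGF - X 1 * stackGF := by
    ring
  have h1 : (X 0 * X 1 : MvPowerSeries (Fin 2) ℚ)
      = monomial (single 0 1 + single 1 1) 1 := by
    rw [X_def, X_def, monomial_mul_monomial, mul_one]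
  have h2 : (X 0 * X 1 * X 0 : MvPowerSeries (Fin 2) ℚ)
      = monomial (single 0 2 + single 1 1) 1 := by
    rw [h1, X_def, monomial_mul_monomial, mul_one]
    congr 1
    rw [show (single (0 : Fin 2) 2 : Fin 2 →₀ ℕ) = single 0 1 + single 0 1 from by
      rw [← Finsupp.single_add]]
    abel_nf
  have rhs : (X 0 * X 1 * (1 - X 0) : MvPowerSeries (Fin 2) ℚ)
      = monomial (single 0 1 + single 1 1) 1 - monomial (single 0 2 + single 1 1) 1 := by
    rw [mul_sub, mul_one, h2, h1]
  ext d
  rw [expand, rhs]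
  simp only [map_sub, map_add]
  rw [coeff_X_mul' 0, coeff_X_mul' 1, X_pow_eq, coeff_monomial_mul]
  rw [coeff_monomial, coeff_monomial]
  simp only [stackGF_coeff, one_mul]
  have k00 : (d - single 0 1 : Fin 2 →₀ ℕ) 0 = d 0 - 1 := by rw [Finsupp.tsub_apply]; simp
  have k01 : (d - single 0 1 : Fin 2 →₀ ℕ) 1 = d 1 := by
    rw [Finsupp.tsub_apply, Finsupp.single_eq_of_ne (by decide)]
    omega
  have k10 : (d - single 1 1 : Fin 2 →₀ ℕ) 0 = d 0 := by
    rw [Finsupp.tsub_apply, Finsupp.single_eq_of_ne (by decide)]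
    omega
  have k11 : (d - single 1 1 : Fin 2 →₀ ℕ) 1 = d 1 - 1 := by rw [Finsupp.tsub_apply]; simp
  have k20 : (d - single 0 2 : Fin 2 →₀ ℕ) 0 = d 0 - 2 := by rw [Finsupp.tsub_apply]; simp
  have k21 : (d - single 0 2 : Fin 2 →₀ ℕ) 1 = d 1 := by
    rw [Finsupp.tsub_apply, Finsupp.single_eq_of_ne (by decide)]
    omega
  rw [k00, k01, k10, k11, k20, k21]
  simp only [Finsupp.single_le_iff]
  simp only [finsupp_eq_pair]
  exact keyArith (d 0) (d 1)


end AuxStack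

open MvPowerSeries in
/-- `S(x,y) = xy(1-x)/((1-x)^2 - y)`; equivalently `S = xy + xS + S₊` and
`S₊ = yS + xS₊` where `S₊` is the series of stacks whose last column is not of
minimal height (here stated through the solved system). -/
theorem stackGF_eq :
    ((1 - X 0) ^ 2 - X 1 : MvPowerSeries (Fin 2) ℚ) * stackGF = X 0 * X 1 * (1 - X 0) ∧
    ∃ Splus : MvPowerSeries (Fin 2) ℚ,
      stackGF = X 0 * X 1 + X 0 * stackGF + Splus ∧
      Splus = X 1 * stackGF + X 0 * Splus := by
  refine ⟨part1, stackGF - X 0 * X 1 - X 0 * stackGF, by ring, ?_⟩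
  linear_combination part1
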